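/- Let Γ be a group, n ≥ 1, and let d_{n-1} ∈ M_{k_n×k_{n-1}}(ℝΓ), d_n ∈ M_{k_{n+1}×k_n}(ℝΓ) satisfy d_n d_{n-1} = 0. Assume the right-exactness condition in degree n: every x ∈ M_{k_n×k_n}(ℝΓ) with x d_{n-1} = 0 is of the form x = y d_n for some y ∈ M_{k_n×k_{n+1}}(ℝΓ). Then D_n(Σ²M_{k_{n+1}}(ℝΓ)) = im D_n ∩ Σ²M_{k_n}(ℝΓ) = ker D_{n-1} ∩ Σ²M_{k_n}(ℝΓ); that is, an element of Σ²M_{k_n}(ℝΓ) satisfies d_{n-1}* a d_{n-1} = 0 if and only if it equals d_n* b d_n for some b ∈ Σ²M_{k_{n+1}}(ℝΓ), if and only if it equals d_n* b d_n for some b ∈ M_{k_{n+1}}(ℝΓ). -/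

import Mathlib

open scoped BigOperators
noncomputable section

universe u v w

/-- The star operation on the real group algebra, determined by `γ ↦ γ⁻¹`. -/
def rgStar {G : Type u} [Group G] (x : MonoidAlgebra ℝ G) : MonoidAlgebra ℝ G :=
  MonoidAlgebra.ofCoeff (Finsupp.mapDomain (fun g : G => g⁻¹) x.coeff)

/-- The adjoint of a matrix over the real group algebra:
transpose and apply `rgStar` entrywise. -/
def adjM {G : Type u} [Group G] {m n : Type*}
    (a : Matrix m n (MonoidAlgebra ℝ G)) : Matrix n m (MonoidAlgebra ℝ G) :=
  Matrix.of fun i j => rgStar (a j i)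

/-- A square matrix over the real group algebra is a sum of hermitian squares. -/
def IsSOS {G : Type u} [Group G] {p : Type*} [Fintype p]
    (x : Matrix p p (MonoidAlgebra ℝ G)) : Prop :=
  ∃ (m : ℕ) (a : Fin m → Matrix p p (MonoidAlgebra ℝ G)),
    x = ∑ i, adjM (a i) * a i

/-- A unitary representation of `G` on a real Hilbert space. -/
structure URep (G : Type u) [Group G] : Type (max u (v + 1)) where
  H : Type v
  [normed : NormedAddCommGroup H]
  [ips : InnerProductSpace ℝ H]
  [complete : CompleteSpace H]
  π : G →* (H →L[ℝ] H)
  isometric : ∀ (γ : G) (x : H), ‖π γ x‖ = ‖x‖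

attribute [instance] URep.normed URep.ips URep.complete

/-- The extension of a unitary representation to the real group algebra. -/
noncomputable def URep.alg {G : Type u} [Group G] (ρ : URep.{u, v} G) :
    MonoidAlgebra ℝ G →ₐ[ℝ] (ρ.H →L[ℝ] ρ.H) :=
  MonoidAlgebra.lift ℝ (ρ.H →L[ℝ] ρ.H) G ρ.π

/-- The entrywise application of a unitary representation to a matrix over the
real group algebra, acting on tuples of vectors. -/
noncomputable def URep.mat {G : Type u} [Group G] (ρ : URep.{u, v} G)
    {p q : Type*} [Fintype q] (a : Matrix p q (MonoidAlgebra ℝ G))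
    (z : q → ρ.H) : p → ρ.H :=
  fun i => ∑ j, ρ.alg (a i j) (z j)

/-- The inner product on a finite power of a real Hilbert space. -/
noncomputable def pInner {G : Type u} [Group G] (ρ : URep.{u, v} G)
    {p : Type*} [Fintype p] (x y : p → ρ.H) : ℝ :=
  ∑ i, inner ℝ (x i) (y i)

section helpers
variable {G : Type u} [Group G]

lemma rgStar_zero : rgStar (0 : MonoidAlgebra ℝ G) = 0 := MonoidAlgebra.mapDomain_zero (fun g : G => g⁻¹)

lemma rgStar_add (x y : MonoidAlgebra ℝ G) : rgStar (x + y) = rgStar x + rgStar y :=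
  MonoidAlgebra.mapDomain_add (fun g : G => g⁻¹) x y

lemma rgStar_single (g : G) (r : ℝ) :
    rgStar (MonoidAlgebra.single g r) = MonoidAlgebra.single g⁻¹ r :=
  MonoidAlgebra.mapDomain_single

lemma rgStar_sum {ι : Type*} (s : Finset ι) (f : ι → MonoidAlgebra ℝ G) :
    rgStar (∑ i ∈ s, f i) = ∑ i ∈ s, rgStar (f i) :=
  map_sum ({toFun := rgStar, map_zero' := rgStar_zero, map_add' := rgStar_add} :
    MonoidAlgebra ℝ G →+ MonoidAlgebra ℝ G) f s

lemma rgStar_mul (x y : MonoidAlgebra ℝ G) : rgStar (x * y) = rgStar y * rgStar x := by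
  induction x using MonoidAlgebra.induction_linear with
  | zero => simp [rgStar_zero]
  | add f g hf hg => rw [add_mul, rgStar_add, rgStar_add, hf, hg, mul_add]
  | single a b =>
    induction y using MonoidAlgebra.induction_linear with
    | zero => simp [rgStar_zero]
    | add f g hf hg => rw [mul_add, rgStar_add, rgStar_add, hf, hg, add_mul]
    | single c d =>
      rw [MonoidAlgebra.single_mul_single, rgStar_single, rgStar_single, rgStar_single,
        MonoidAlgebra.single_mul_single, mul_inv_rev, mul_comm d b]

lemma adjM_zero {m n : Type*} : adjM (0 : Matrix m n (MonoidAlgebra ℝ G)) = 0 := by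
  ext i j; simp [adjM, rgStar_zero]

lemma adjM_mul {m n p : Type*} [Fintype n]
    (x : Matrix m n (MonoidAlgebra ℝ G)) (y : Matrix n p (MonoidAlgebra ℝ G)) :
    adjM (x * y) = adjM y * adjM x := by
  refine Matrix.ext fun i j => ?_
  simp only [adjM, Matrix.of_apply, Matrix.mul_apply]
  rw [rgStar_sum]
  exact Finset.sum_congr rfl fun k _ => rgStar_mul (G := G) _ _

lemma eval_one_rgStar_mul (u v : MonoidAlgebra ℝ G) :
    (rgStar u * v).coeff 1 = ∑ g ∈ u.coeff.support, u.coeff g * v.coeff g := by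
  have h1 : rgStar u * v = u.coeff.sum fun g r => MonoidAlgebra.single g⁻¹ r * v := by
    rw [rgStar, Finsupp.mapDomain, MonoidAlgebra.ofCoeff_finsuppSum, Finsupp.sum_mul]
    rfl
  rw [h1, Finsupp.sum, MonoidAlgebra.coeff_sum, Finsupp.finset_sum_apply]
  refine Finset.sum_congr rfl fun g _ => ?_
  rw [MonoidAlgebra.coeff_single_mul_apply]
  simp

lemma eval_one_nonneg (u : MonoidAlgebra ℝ G) : 0 ≤ (rgStar u * u).coeff 1 := by
  rw [eval_one_rgStar_mul]
  exact Finset.sum_nonneg fun g _ => mul_self_nonneg _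

lemma eval_one_eq_zero (u : MonoidAlgebra ℝ G) (h : (rgStar u * u).coeff 1 = 0) : u = 0 := by
  rw [eval_one_rgStar_mul] at h
  ext g
  by_cases hg : g ∈ u.coeff.support
  · have := (Finset.sum_eq_zero_iff_of_nonneg fun g _ => mul_self_nonneg (u.coeff g)).mp h g hg
    have := mul_self_eq_zero.mp this
    simpa using this
  · simpa using Finsupp.notMem_support_iff.mp hg

/-- Key positivity: sum of hermitian squares of rectangular matrices is zero iff all zero. -/
lemma all_zero_of_sum_adj_mul {m pk qk : ℕ}
    (w : Fin m → Matrix (Fin pk) (Fin qk) (MonoidAlgebra ℝ G))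
    (h : ∑ i, adjM (w i) * w i = 0) : ∀ i, w i = 0 := by
  have key : ∑ i, ∑ c : Fin qk, ∑ j : Fin pk, (rgStar (w i j c) * w i j c).coeff 1 = 0 := by
    calc ∑ i, ∑ c : Fin qk, ∑ j : Fin pk, (rgStar (w i j c) * w i j c).coeff 1
        = ∑ c : Fin qk, ((∑ i, adjM (w i) * w i) c c).coeff 1 := by
          rw [Finset.sum_comm]
          refine Finset.sum_congr rfl fun c _ => ?_
          simp only [Matrix.sum_apply, Matrix.mul_apply, adjM, Matrix.of_apply]
          rw [MonoidAlgebra.coeff_sum, Finsupp.finset_sum_apply]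
          refine Finset.sum_congr rfl fun x _ => ?_
          rw [MonoidAlgebra.coeff_sum, Finsupp.finset_sum_apply]
      _ = 0 := by rw [h]; simp
  have hnn : ∀ i ∈ Finset.univ (α := Fin m),
      0 ≤ ∑ c : Fin qk, ∑ j : Fin pk, (rgStar (w i j c) * w i j c).coeff 1 :=
    fun i _ => Finset.sum_nonneg fun c _ => Finset.sum_nonneg fun j _ => eval_one_nonneg _
  intro i
  have hi := (Finset.sum_eq_zero_iff_of_nonneg hnn).mp key i (Finset.mem_univ i)
  ext j c
  have hc := (Finset.sum_eq_zero_iff_of_nonneg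
    (fun c _ => Finset.sum_nonneg fun j _ => eval_one_nonneg (w i j c))).mp hi c (Finset.mem_univ c)
  have hj := (Finset.sum_eq_zero_iff_of_nonneg
    (fun j _ => eval_one_nonneg (w i j c))).mp hc j (Finset.mem_univ j)
  have := eval_one_eq_zero _ hj
  simp [this]

end helpers

section sos
variable {G : Type u} [Group G]

lemma isSOS_zero {p : Type*} [Fintype p] : IsSOS (0 : Matrix p p (MonoidAlgebra ℝ G)) :=
  ⟨0, Fin.elim0, by simp⟩

lemma isSOS_add {p : Type*} [Fintype p] {x y : Matrix p p (MonoidAlgebra ℝ G)}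
    (hx : IsSOS x) (hy : IsSOS y) : IsSOS (x + y) := by
  obtain ⟨m1, a1, rfl⟩ := hx
  obtain ⟨m2, a2, rfl⟩ := hy
  refine ⟨m1 + m2, Fin.append a1 a2, ?_⟩
  rw [Fin.sum_univ_add]
  simp [Fin.append_left, Fin.append_right]

lemma isSOS_adj_mul_self {pk qk : ℕ} (y : Matrix (Fin pk) (Fin qk) (MonoidAlgebra ℝ G)) :
    IsSOS (adjM y * y) := by
  rcases Nat.eq_zero_or_pos qk with h | h
  · subst h
    exact ⟨0, Fin.elim0, by ext i j; exact i.elim0⟩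
  · set j0 : Fin qk := ⟨0, h⟩
    refine ⟨pk, fun r => Matrix.of fun j c => if j = j0 then y r c else 0, ?_⟩
    refine Matrix.ext fun c c' => ?_
    simp only [Matrix.mul_apply, Matrix.sum_apply, adjM, Matrix.of_apply,
      apply_ite rgStar, rgStar_zero, ite_mul, mul_ite, zero_mul, mul_zero]
    rw [Finset.sum_comm]
    simp [Finset.sum_ite_eq']

lemma isSOS_sum_adj_mul {m pk qk : ℕ}
    (f : Fin m → Matrix (Fin pk) (Fin qk) (MonoidAlgebra ℝ G)) :
    IsSOS (∑ i, adjM (f i) * f i) :=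
  Finset.sum_induction _ IsSOS (fun _ _ => isSOS_add) isSOS_zero
    (fun i _ => isSOS_adj_mul_self (f i))

end sos

/-- sums of hermitian squares in `ker D_{n-1}` are exactly the
images under `D_n` of sums of hermitian squares: for `a ∈ Σ²M_{k_n}(ℝΓ)`,
`d_{n-1}* a d_{n-1} = 0` iff `a = d_n* b d_n` with `b ∈ Σ²M_{k_{n+1}}(ℝΓ)`,
iff `a = d_n* b d_n` for some matrix `b`. -/
theorem stmt_4 {G : Type u} [Group G] (n : ℕ) (hn : 1 ≤ n)
    (kprev kn knext : ℕ)
    (dnm1 : Matrix (Fin kn) (Fin kprev) (MonoidAlgebra ℝ G))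
    (dn : Matrix (Fin knext) (Fin kn) (MonoidAlgebra ℝ G))
    (hdd : dn * dnm1 = 0)
    (hexR : ∀ x : Matrix (Fin kn) (Fin kn) (MonoidAlgebra ℝ G),
      x * dnm1 = 0 →
      ∃ y : Matrix (Fin kn) (Fin knext) (MonoidAlgebra ℝ G), x = y * dn) :
    ∀ a : Matrix (Fin kn) (Fin kn) (MonoidAlgebra ℝ G), IsSOS a →
      ((adjM dnm1 * a * dnm1 = 0 ↔
        ∃ b : Matrix (Fin knext) (Fin knext) (MonoidAlgebra ℝ G),
          IsSOS b ∧ a = adjM dn * b * dn) ∧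
       (adjM dnm1 * a * dnm1 = 0 ↔
        ∃ b : Matrix (Fin knext) (Fin knext) (MonoidAlgebra ℝ G),
          a = adjM dn * b * dn)) := by
  rintro a ⟨m, c, rfl⟩
  -- backward direction: any `b` works
  have bwd : ∀ b : Matrix (Fin knext) (Fin knext) (MonoidAlgebra ℝ G),
      (∑ i, adjM (c i) * c i) = adjM dn * b * dn →
      adjM dnm1 * (∑ i, adjM (c i) * c i) * dnm1 = 0 := by
    intro b hb
    rw [hb]
    calc adjM dnm1 * (adjM dn * b * dn) * dnm1
        = adjM (dn * dnm1) * (b * (dn * dnm1)) := by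
          rw [adjM_mul]
          simp only [Matrix.mul_assoc]
      _ = 0 := by rw [hdd, adjM_zero, Matrix.zero_mul]
  -- forward direction
  have fwd : adjM dnm1 * (∑ i, adjM (c i) * c i) * dnm1 = 0 →
      ∃ b : Matrix (Fin knext) (Fin knext) (MonoidAlgebra ℝ G),
        IsSOS b ∧ (∑ i, adjM (c i) * c i) = adjM dn * b * dn := by
    intro hker
    have hrw : adjM dnm1 * (∑ i, adjM (c i) * c i) * dnm1
        = ∑ i, adjM (c i * dnm1) * (c i * dnm1) := by
      rw [Matrix.mul_sum, Matrix.sum_mul]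
      refine Finset.sum_congr rfl fun i _ => ?_
      rw [adjM_mul]
      simp only [Matrix.mul_assoc]
    rw [hrw] at hker
    have hz := all_zero_of_sum_adj_mul _ hker
    choose y hy using fun i => hexR (c i) (hz i)
    refine ⟨∑ i, adjM (y i) * y i, isSOS_sum_adj_mul y, ?_⟩
    rw [Matrix.mul_sum, Matrix.sum_mul]
    refine Finset.sum_congr rfl fun i _ => ?_
    rw [hy i, adjM_mul]
    simp only [Matrix.mul_assoc]
  constructor
  · exact ⟨fwd, fun ⟨b, _, hb⟩ => bwd b hb⟩
  · exact ⟨fun h => (fwd h).imp fun b hb => hb.2, fun ⟨b, hb⟩ => bwd b hb⟩
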